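/- For every n ≥ 2 there exist m ≥ n/2 and matrices X, Y ∈ ℝ^{n×m} with orthonormal columns such that ‖X − Y‖_F² ≥ 2m − 2√m while max_{j,k} |⟨X_j, Y_k⟩| = 1/√m. -/

import Mathlib

open Matrix

noncomputable def Had (t : ℕ) (a b : Fin t → Bool) : ℝ :=
  ∏ k, (if a k && b k then (-1 : ℝ) else 1)

lemma Had_abs (t : ℕ) (a b : Fin t → Bool) : |Had t a b| = 1 := by
  rw [Had, Finset.abs_prod]
  apply Finset.prod_eq_one
  intro k _
  split <;> simp

lemma Had_symm (t : ℕ) (a b : Fin t → Bool) : Had t a b = Had t b a := by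
  unfold Had
  exact Finset.prod_congr rfl fun k _ => by rw [Bool.and_comm]

lemma Had_orth (t : ℕ) (a c : Fin t → Bool) :
    ∑ b : Fin t → Bool, Had t a b * Had t c b = if a = c then (2 ^ t : ℝ) else 0 := by
  have h1 : ∀ b : Fin t → Bool, Had t a b * Had t c b =
      ∏ k, ((if a k && b k then (-1 : ℝ) else 1) * (if c k && b k then (-1 : ℝ) else 1)) := by
    intro b; rw [Had, Had, ← Finset.prod_mul_distrib]
  have h2 : ∑ b : Fin t → Bool, Had t a b * Had t c b =
      ∏ k, ∑ x : Bool, ((if a k && x then (-1 : ℝ) else 1) * (if c k && x then (-1 : ℝ) else 1)) := by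
    rw [Fintype.prod_sum (fun k x => (if a k && x then (-1 : ℝ) else 1) * (if c k && x then (-1 : ℝ) else 1))]
    exact Finset.sum_congr rfl fun b _ => h1 b
  rw [h2]
  have h3 : ∀ k, (∑ x : Bool, ((if a k && x then (-1 : ℝ) else 1) * (if c k && x then (-1 : ℝ) else 1)))
      = if a k = c k then 2 else 0 := by
    intro k
    rw [Fintype.sum_bool]
    cases ha : a k <;> cases hc : c k <;> norm_num
  rw [Finset.prod_congr rfl fun k _ => h3 k]
  by_cases h : a = c
  · subst h; simp
  · rw [if_neg h]
    obtain ⟨k, hk⟩ : ∃ k, a k ≠ c k := Function.ne_iff.1 h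
    exact Finset.prod_eq_zero (Finset.mem_univ k) (if_neg hk)

lemma sum_fin_pad {n m : ℕ} (h : m ≤ n) (g : Fin m → ℝ) :
    ∑ i : Fin n, (if hi : (i : ℕ) < m then g ⟨i, hi⟩ else 0) = ∑ i : Fin m, g i := by
  rw [Fin.sum_univ_eq_sum_range (fun i => if hi : i < m then g ⟨i, hi⟩ else 0) n]
  rw [← Finset.sum_subset (Finset.range_subset_range.2 h)
      (fun x _ hx => dif_neg (by simpa using hx))]
  rw [← Fin.sum_univ_eq_sum_range (fun i => if hi : i < m then g ⟨i, hi⟩ else 0) m]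
  exact Finset.sum_congr rfl fun i _ => by simp

/-- For every `n ≥ 2` there exist `m ≥ n/2` and matrices `X, Y ∈ ℝ^{n×m}` with
orthonormal columns such that `‖X − Y‖_F² ≥ 2m − 2√m` while
`max_{j,k} |⟨X_j, Y_k⟩| = 1/√m`. -/
theorem exists_distant_orthonormal_small_cos {n : ℕ} (hn : 2 ≤ n) :
    ∃ m : ℕ, (n : ℝ) / 2 ≤ (m : ℝ) ∧
      ∃ X Y : Matrix (Fin n) (Fin m) ℝ,
        Xᵀ * X = 1 ∧ Yᵀ * Y = 1 ∧
        2 * (m : ℝ) - 2 * Real.sqrt m ≤ (∑ i, ∑ j, (X i j - Y i j) ^ 2) ∧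
        (⨆ j : Fin m, ⨆ k : Fin m, |∑ i, X i j * Y i k|) = 1 / Real.sqrt m := by
  set t := Nat.log 2 n with ht
  set m := 2 ^ t with hm
  have hmn : m ≤ n := Nat.pow_log_le_self 2 (by omega)
  have hnm : n < 2 * m := by
    have h1 := Nat.lt_pow_succ_log_self (by norm_num : 1 < 2) n
    rw [← ht] at h1
    calc n < 2 ^ (t + 1) := h1
      _ = 2 * m := by rw [hm, pow_succ, Nat.mul_comm]
  have hmpos : 0 < m := Nat.pow_pos (by norm_num)
  have hmR : (0 : ℝ) < m := by exact_mod_cast hmpos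
  set s := Real.sqrt m with hs
  have hspos : 0 < s := Real.sqrt_pos.2 hmR
  have hss : s * s = m := Real.mul_self_sqrt hmR.le
  have hcard : Fintype.card (Fin t → Bool) = m := by simp [hm]
  let e : Fin m ≃ (Fin t → Bool) := (Fintype.equivFinOfCardEq hcard).symm
  have hnmR : (n : ℝ) < 2 * m := by exact_mod_cast hnm
  refine ⟨m, by linarith, ?_⟩
  set X : Matrix (Fin n) (Fin m) ℝ := fun i j => if (i : ℕ) = (j : ℕ) then 1 else 0 with hX
  set Y : Matrix (Fin n) (Fin m) ℝ :=
    fun i j => if hi : (i : ℕ) < m then Had t (e ⟨i, hi⟩) (e j) / s else 0 with hY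
  -- column inner products
  have hXcol : ∀ j k : Fin m, ∑ i, X i j * X i k = if j = k then (1 : ℝ) else 0 := by
    intro j k
    have step : ∀ i : Fin n, X i j * X i k =
        (if hi : (i : ℕ) < m then (if (⟨i, hi⟩ : Fin m) = j then (1:ℝ) else 0) * (if (⟨i, hi⟩ : Fin m) = k then 1 else 0) else 0) := by
      intro i
      by_cases hi : (i : ℕ) < m
      · rw [dif_pos hi]
        simp only [hX, Fin.ext_iff]
      · rw [dif_neg hi, hX]
        have : (i : ℕ) ≠ (j : ℕ) := fun h => hi (h ▸ j.isLt)
        simp [this]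
    calc ∑ i : Fin n, X i j * X i k
        = ∑ i : Fin m, (if i = j then (1:ℝ) else 0) * (if i = k then 1 else 0) := by
          rw [Finset.sum_congr rfl fun i _ => step i]
          exact sum_fin_pad hmn (fun i => (if i = j then (1:ℝ) else 0) * (if i = k then 1 else 0))
      _ = if j = k then (1 : ℝ) else 0 := by
          rw [Finset.sum_eq_single j (fun i _ hij => by simp [hij])
            (fun h => absurd (Finset.mem_univ j) h)]
          by_cases hjk : j = k <;> simp [hjk, eq_comm]
  have hYcol : ∀ j k : Fin m, ∑ i, Y i j * Y i k = if j = k then (1 : ℝ) else 0 := by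
    intro j k
    have step : ∀ i : Fin n, Y i j * Y i k =
        (if hi : (i : ℕ) < m then Had t (e j) (e ⟨i, hi⟩) * Had t (e k) (e ⟨i, hi⟩) / (m : ℝ) else 0) := by
      intro i
      by_cases hi : (i : ℕ) < m
      · rw [hY]; simp only [dif_pos hi]
        rw [Had_symm t (e j), Had_symm t (e k), div_mul_div_comm, hss]
      · rw [hY]; simp [dif_neg hi]
    calc ∑ i : Fin n, Y i j * Y i k
        = ∑ i : Fin m, Had t (e j) (e i) * Had t (e k) (e i) / (m : ℝ) := by
          rw [Finset.sum_congr rfl fun i _ => step i]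
          exact sum_fin_pad hmn (fun i => Had t (e j) (e i) * Had t (e k) (e i) / (m : ℝ))
      _ = (if e j = e k then ((2:ℝ) ^ t) else 0) / m := by
          rw [← Finset.sum_div, Equiv.sum_comp e (fun b => Had t (e j) b * Had t (e k) b), Had_orth]
      _ = if j = k then (1 : ℝ) else 0 := by
          by_cases hjk : j = k
          · subst hjk
            rw [if_pos rfl, if_pos rfl, hm]
            push_cast
            exact div_self (by positivity)
          · rw [if_neg (fun h => hjk (e.injective h)), if_neg hjk, zero_div]
  have hXY : ∀ j k : Fin m, ∑ i, X i j * Y i k = Had t (e j) (e k) / s := by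
    intro j k
    have step : ∀ i : Fin n, X i j * Y i k =
        (if hi : (i : ℕ) < m then (if (⟨i, hi⟩ : Fin m) = j then (1:ℝ) else 0) * (Had t (e ⟨i, hi⟩) (e k) / s) else 0) := by
      intro i
      by_cases hi : (i : ℕ) < m
      · rw [hX, hY]; simp only [dif_pos hi, Fin.ext_iff]
      · rw [hX, hY]; simp [dif_neg hi]
    calc ∑ i : Fin n, X i j * Y i k
        = ∑ i : Fin m, (if i = j then (1:ℝ) else 0) * (Had t (e i) (e k) / s) := by
          rw [Finset.sum_congr rfl fun i _ => step i]
          exact sum_fin_pad hmn (fun i => (if i = j then (1:ℝ) else 0) * (Had t (e i) (e k) / s))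
      _ = Had t (e j) (e k) / s := by
          rw [Finset.sum_eq_single j (fun i _ hij => by simp [hij])
            (fun h => absurd (Finset.mem_univ j) h)]
          simp
  refine ⟨X, Y, ?_, ?_, ?_, ?_⟩
  · ext j k
    simp only [Matrix.mul_apply, Matrix.transpose_apply, Matrix.one_apply, hXcol]
  · ext j k
    simp only [Matrix.mul_apply, Matrix.transpose_apply, Matrix.one_apply, hYcol]
  · rw [Finset.sum_comm]
    have expand : ∀ j : Fin m, ∑ i, (X i j - Y i j) ^ 2 = 2 - 2 * (Had t (e j) (e j) / s) := by
      intro j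
      have h1 : ∀ i : Fin n, (X i j - Y i j) ^ 2 =
          X i j * X i j - 2 * (X i j * Y i j) + Y i j * Y i j := fun i => by ring
      rw [Finset.sum_congr rfl fun i _ => h1 i, Finset.sum_add_distrib, Finset.sum_sub_distrib,
        ← Finset.mul_sum, hXcol j j, hYcol j j, hXY j j]
      simp; ring
    rw [Finset.sum_congr rfl fun j _ => expand j]
    have hbound : ∀ j : Fin m, 2 - 2 / s ≤ 2 - 2 * (Had t (e j) (e j) / s) := by
      intro j
      have h1 : Had t (e j) (e j) ≤ 1 := (abs_le.1 (le_of_eq (Had_abs t _ _))).2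
      have h2 : Had t (e j) (e j) / s ≤ 1 / s := by gcongr
      have h3 := mul_le_mul_of_nonneg_left h2 (by norm_num : (0:ℝ) ≤ 2)
      have h4 : 2 * (1 / s) = 2 / s := by ring
      linarith
    calc 2 * (m : ℝ) - 2 * s = ∑ _j : Fin m, (2 - 2 / s) := by
          rw [Finset.sum_const, Finset.card_univ, Fintype.card_fin, nsmul_eq_mul]
          have hdv : (m : ℝ) / s = s := by rw [hs, Real.div_sqrt]
          have : (m : ℝ) * (2 - 2 / s) = 2 * m - 2 * ((m : ℝ) / s) := by ring
          rw [this, hdv]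
      _ ≤ ∑ j : Fin m, (2 - 2 * (Had t (e j) (e j) / s)) :=
          Finset.sum_le_sum fun j _ => hbound j
  · have hval : ∀ j k : Fin m, |∑ i, X i j * Y i k| = 1 / s := by
      intro j k
      rw [hXY, abs_div, Had_abs, abs_of_pos hspos]
    have hne : Nonempty (Fin m) := ⟨⟨0, hmpos⟩⟩
    calc (⨆ j : Fin m, ⨆ k : Fin m, |∑ i, X i j * Y i k|)
        = ⨆ _j : Fin m, ⨆ _k : Fin m, (1 / s) := by
          congr 1; funext j; congr 1; funext k; exact hval j k
      _ = 1 / s := by rw [ciSup_const, ciSup_const]
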